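/- Let g be a nonzero Laurent polynomial over ℚ in the variable q, let ε : ℕ → ℤ take only the values 1 and -1, and let p : ℕ → ℚ[q, q⁻¹] be a sequence of nonzero Laurent polynomials such that for every n ≥ 1, p(n) = -q·p(n-1) + ε(n)·q^(3n)·g. Then there exists a positive integer N such that deg p(N) - deg p(N-1) ≥ 2. -/

import Mathlib

open LaurentPolynomial

/-- The degree of a Laurent polynomial: the largest exponent of the variable occurring
with nonzero coefficient (junk value `0` for the zero polynomial). -/
noncomputable def ldeg (f : LaurentPolynomial ℚ) : ℤ :=
  (LaurentPolynomial.degree f).unbotD 0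

private lemma my_deg_eq (f : LaurentPolynomial ℚ) :
    f.degree = AddMonoidAlgebra.supDegree (WithBot.some : ℤ → WithBot ℤ) f := by
  rw [LaurentPolynomial.degree, Finset.max_eq_sup_withBot]

private lemma my_degree_mul_le (f h : LaurentPolynomial ℚ) :
    (f * h).degree ≤ f.degree + h.degree := by
  rw [my_deg_eq, my_deg_eq, my_deg_eq]
  exact AddMonoidAlgebra.supDegree_mul_le (fun a b => by norm_cast)

private lemma my_degree_T_mul (n : ℤ) (f : LaurentPolynomial ℚ) :
    (T n * f).degree = (n : WithBot ℤ) + f.degree := by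
  apply le_antisymm
  · refine (my_degree_mul_le _ _).trans ?_
    rw [degree_T]
  · have hf : f = T (-n) * (T n * f) := by
      rw [← mul_assoc, ← T_add, neg_add_cancel, T_zero, one_mul]
    have h2 : f.degree ≤ ((-n : ℤ) : WithBot ℤ) + (T n * f).degree := by
      conv_lhs => rw [hf]
      refine (my_degree_mul_le _ _).trans ?_
      rw [degree_T]
    have h3 := add_le_add_right h2 ((n : ℤ) : WithBot ℤ)
    rwa [← add_assoc, ← WithBot.coe_add, add_neg_cancel, WithBot.coe_zero, zero_add] at h3

private lemma my_degree_neg (f : LaurentPolynomial ℚ) : (-f).degree = f.degree := by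
  rw [my_deg_eq, my_deg_eq]
  exact AddMonoidAlgebra.supDegree_neg

private lemma my_degree_add_right {a b : LaurentPolynomial ℚ} (h : a.degree < b.degree) :
    (a + b).degree = b.degree := by
  rw [my_deg_eq, my_deg_eq]
  rw [my_deg_eq, my_deg_eq] at h
  exact AddMonoidAlgebra.supDegree_add_eq_right h

private lemma my_degree_eq_ldeg {f : LaurentPolynomial ℚ} (hf : f ≠ 0) :
    f.degree = (ldeg f : WithBot ℤ) := by
  obtain ⟨a, ha⟩ := WithBot.ne_bot_iff_exists.mp
    (fun h => hf (LaurentPolynomial.degree_eq_bot_iff.mp h))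
  simp [ldeg, ← ha]

theorem stmt1 (g : LaurentPolynomial ℚ) (hg : g ≠ 0)
    (ε : ℕ → ℤ) (hε : ∀ n, ε n = 1 ∨ ε n = -1)
    (p : ℕ → LaurentPolynomial ℚ) (hp : ∀ n, p n ≠ 0)
    (hrec : ∀ n : ℕ, 1 ≤ n → p n = -(T 1) * p (n - 1) + ε n • (T (3 * (n : ℤ)) * g)) :
    ∃ N : ℕ, 0 < N ∧ 2 ≤ ldeg (p N) - ldeg (p (N - 1)) := by
  by_contra hcon
  push_neg at hcon
  -- hcon : ∀ N, 0 < N → ldeg (p N) - ldeg (p (N-1)) < 2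
  obtain ⟨dg, hdg⟩ := WithBot.ne_bot_iff_exists.mp
    (fun h => hg (LaurentPolynomial.degree_eq_bot_iff.mp h))
  set d0 := ldeg (p 0) with hd0
  have hbound : ∀ k : ℕ, ldeg (p k) ≤ d0 + k := by
    intro k
    induction k with
    | zero => simp [hd0]
    | succ k ih =>
      have h := hcon (k + 1) (Nat.succ_pos k)
      simp only [Nat.add_sub_cancel] at h
      push_cast
      omega
  set n : ℕ := (d0 - dg).toNat + 1 with hn
  have hn1 : 1 ≤ n := Nat.le_add_left 1 _
  have hnz : d0 - dg + 1 ≤ (n : ℤ) := by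
    have := Int.self_le_toNat (d0 - dg)
    push_cast [hn]
    omega
  have hr := hrec n hn1
  have hd1 : (-(T 1) * p (n - 1)).degree = ((1 + ldeg (p (n - 1)) : ℤ) : WithBot ℤ) := by
    rw [neg_mul, my_degree_neg, my_degree_T_mul, my_degree_eq_ldeg (hp (n - 1))]
    norm_cast
  have hd2 : (ε n • (T (3 * (n : ℤ)) * g)).degree = ((3 * (n : ℤ) + dg : ℤ) : WithBot ℤ) := by
    have hT : (T (3 * (n : ℤ)) * g).degree = ((3 * (n : ℤ) + dg : ℤ) : WithBot ℤ) := by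
      rw [my_degree_T_mul, ← hdg]
      norm_cast
    rcases hε n with h | h
    · rw [h, one_smul, hT]
    · rw [h, neg_one_zsmul, my_degree_neg, hT]
  have hblt := hbound (n - 1)
  have hcast : ((n - 1 : ℕ) : ℤ) = (n : ℤ) - 1 := by
    have : (1 : ℕ) ≤ n := hn1
    omega
  have hlt : (-(T 1) * p (n - 1)).degree < (ε n • (T (3 * (n : ℤ)) * g)).degree := by
    rw [hd1, hd2, WithBot.coe_lt_coe]
    omega
  have hdeg : ldeg (p n) = 3 * (n : ℤ) + dg := by
    have : (p n).degree = ((3 * (n : ℤ) + dg : ℤ) : WithBot ℤ) := by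
      rw [hr, my_degree_add_right hlt, hd2]
    rw [my_degree_eq_ldeg (hp n)] at this
    exact_mod_cast this
  have hfin := hcon n hn1
  omega
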